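/- arXiv:2404.00538 — 4 statements merged into one kernel-verified Lean document; each statement's English description precedes it below -/
import Mathlib

section
/- Johnson–Lindenstrauss lemma: Given any ε ∈ (0,1) and an integer N ≥ 2, let k be a positive integer satisfying k ≥ (24 / (3ε² − 2ε³)) · log N. Then for any set A containing N points in ℝ^m there exists a linear map f : ℝ^m → ℝ^k such that for all x, y ∈ A: (1−ε)‖x−y‖² ≤ ‖f(x)−f(y)‖² ≤ (1+ε)‖x−y‖². -/
set_option maxHeartbeats 1000000

open Real MeasureTheory MeasureTheory.Measure ProbabilityTheory
open scoped ENNReal NNReal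

namespace JLaux

/-- cubic log inequality -/
lemma log_cubic {x : ℝ} (hx : -1 < x) : Real.log (1 + x) ≤ x - x^2/2 + x^3/3 := by
  set g : ℝ → ℝ := fun s => s - s^2/2 + s^3/3 - Real.log (1+s) with hg
  have hderiv : ∀ y ∈ Set.Ioi (-1:ℝ), HasDerivAt g (y^3/(1+y)) y := by
    intro y hy
    have hy' : -1 < y := hy
    have hy1 : 0 < 1 + y := by linarith
    have h1 : HasDerivAt (fun s : ℝ => Real.log (1+s)) (1/(1+y)) y := by
      have := (Real.hasDerivAt_log hy1.ne').comp y ((hasDerivAt_id y).const_add 1)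
      rw [one_div]; exact this.congr_deriv (mul_one _)
    have h2 : HasDerivAt (fun s : ℝ => s - s^2/2 + s^3/3) (1 - y + y^2) y := by
      have := (((hasDerivAt_id y).sub (((hasDerivAt_pow 2 y)).div_const 2)).add
        (((hasDerivAt_pow 3 y)).div_const 3))
      refine this.congr_deriv ?_
      norm_num
    have := h2.sub h1
    refine this.congr_deriv ?_
    field_simp
    ring
  have hcont : ContinuousOn g (Set.Ioi (-1:ℝ)) := by
    intro y hy
    exact ((hderiv y hy).continuousAt).continuousWithinAt
  have hg0 : g 0 = 0 := by simp [hg]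
  have key : 0 ≤ g x := by
    rcases le_or_gt 0 x with h | h
    · have hmono : MonotoneOn g (Set.Ici (0:ℝ)) := by
        apply monotoneOn_of_deriv_nonneg (convex_Ici 0)
        · exact hcont.mono (fun y hy => lt_of_lt_of_le (b := (0:ℝ)) (by norm_num) hy)
        · intro y hy
          rw [interior_Ici] at hy
          exact ((hderiv y (by simp only [Set.mem_Ioi] at hy ⊢; linarith)).differentiableAt).differentiableWithinAt
        · intro y hy
          rw [interior_Ici] at hy
          have hy0 : (0:ℝ) < y := hy
          rw [(hderiv y (by simp only [Set.mem_Ioi]; linarith)).deriv]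
          positivity
      have := hmono (Set.self_mem_Ici) (Set.mem_Ici.2 h) h
      rwa [hg0] at this
    · have hanti : AntitoneOn g (Set.Icc x 0) := by
        apply antitoneOn_of_deriv_nonpos (convex_Icc x 0)
        · exact hcont.mono (fun y hy => lt_of_lt_of_le hx hy.1)
        · intro y hy
          rw [interior_Icc] at hy
          exact ((hderiv y (lt_trans hx hy.1)).differentiableAt).differentiableWithinAt
        · intro y hy
          rw [interior_Icc] at hy
          have hy1 : -1 < y := lt_trans hx hy.1
          have hy0 : y < 0 := hy.2
          rw [(hderiv y hy1).deriv]
          apply div_nonpos_of_nonpos_of_nonneg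
          · nlinarith [sq_nonneg y]
          · linarith
      have := hanti (Set.mem_Icc.2 ⟨le_refl x, h.le⟩) (Set.mem_Icc.2 ⟨h.le, le_refl 0⟩) h.le
      rwa [hg0] at this
  simp only [hg] at key
  linarith

noncomputable def γ : Measure ℝ := gaussianReal 0 1

instance : IsProbabilityMeasure γ := by unfold γ; infer_instance

lemma gauss_pdf_one (x : ℝ) : gaussianPDFReal 0 1 x = (√(2*π))⁻¹ * rexp (-x^2/2) := by
  simp [gaussianPDFReal]

/-- Transfer an integral against `γ` to a Lebesgue integral. -/
lemma integral_gauss {E : Type*} [NormedAddCommGroup E] [NormedSpace ℝ E] (f : ℝ → E) :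
    ∫ x, f x ∂γ = ∫ x, ((√(2*π))⁻¹ * rexp (-x^2/2)) • f x := by
  rw [show γ = volume.withDensity (gaussianPDF 0 1) from gaussianReal_of_var_ne_zero _ one_ne_zero]
  rw [show gaussianPDF 0 1 = (fun x => ((Real.toNNReal (gaussianPDFReal 0 1 x) : ℝ≥0) : ℝ≥0∞))
    from rfl]
  rw [integral_withDensity_eq_integral_smul (measurable_gaussianPDFReal 0 1).real_toNNReal f]
  congr 1; ext x
  rw [NNReal.smul_def, Real.coe_toNNReal _ (gaussianPDFReal_nonneg _ _ _), gauss_pdf_one]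

lemma integrable_gauss_iff {E : Type*} [NormedAddCommGroup E] [NormedSpace ℝ E] (f : ℝ → E) :
    Integrable f γ ↔ Integrable (fun x => ((√(2*π))⁻¹ * rexp (-x^2/2)) • f x) volume := by
  rw [show γ = volume.withDensity (gaussianPDF 0 1) from gaussianReal_of_var_ne_zero _ one_ne_zero]
  rw [show gaussianPDF 0 1 = (fun x => ((Real.toNNReal (gaussianPDFReal 0 1 x) : ℝ≥0) : ℝ≥0∞))
    from rfl]
  rw [integrable_withDensity_iff_integrable_smul (measurable_gaussianPDFReal 0 1).real_toNNReal]
  have heq : ∀ x : ℝ, ((Real.toNNReal (gaussianPDFReal 0 1 x)) : ℝ≥0) • f x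
      = ((√(2*π))⁻¹ * rexp (-x^2/2)) • f x := by
    intro x
    rw [NNReal.smul_def, Real.coe_toNNReal _ (gaussianPDFReal_nonneg _ _ _), gauss_pdf_one]
  constructor <;> intro h
  · exact h.congr (Filter.Eventually.of_forall fun x => heq x)
  · exact h.congr (Filter.Eventually.of_forall fun x => (heq x).symm)

/-- integrability of `exp (s x + t x²)` for `t < 1/2` against the Gaussian. -/
lemma integrable_exp_linear_quad (s t : ℝ) (ht : t < 1/2) :
    Integrable (fun x => rexp (s * x + t * x^2)) γ := by
  rw [integrable_gauss_iff]
  have h : ∀ x : ℝ, ((√(2*π))⁻¹ * rexp (-x^2/2)) • rexp (s * x + t * x^2)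
      = (√(2*π))⁻¹ * (rexp (s^2/(4*(1/2-t))) *
        rexp (-(1/2-t) * (x - s/(2*(1/2-t)))^2)) := by
    intro x
    rw [smul_eq_mul, mul_assoc, ← Real.exp_add, ← Real.exp_add]
    congr 2
    set c : ℝ := 1/2 - t with hc
    have hcne : c ≠ 0 := by simp only [hc]; intro h0; rw [sub_eq_zero] at h0; linarith
    have ht' : t = 1/2 - c := by rw [hc]; ring
    rw [ht']
    field_simp
    ring
  simp_rw [h]
  have hpos : 0 < 1/2 - t := by linarith
  exact (((integrable_exp_neg_mul_sq hpos).comp_sub_right (s/(2*(1/2-t)))).const_mul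
    _).const_mul _

lemma integrable_exp_quad {t : ℝ} (ht : t < 1/2) :
    Integrable (fun x => rexp (t * x^2)) γ := by
  have := integrable_exp_linear_quad 0 t ht
  simpa using this

lemma integrable_exp_lin (s : ℝ) : Integrable (fun x => rexp (s * x)) γ := by
  have := integrable_exp_linear_quad s 0 (by norm_num)
  simpa using this

/-- `∫ exp (t x²) dγ = (√(1-2t))⁻¹` for `t < 1/2`. -/
lemma integral_exp_quad {t : ℝ} (ht : t < 1/2) :
    ∫ x, rexp (t * x^2) ∂γ = (√(1-2*t))⁻¹ := by
  rw [integral_gauss]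
  have h : ∀ x : ℝ, ((√(2*π))⁻¹ * rexp (-x^2/2)) • rexp (t * x^2)
      = (√(2*π))⁻¹ * rexp (-(1/2-t) * x^2) := by
    intro x
    rw [smul_eq_mul, mul_assoc, ← Real.exp_add]
    congr 2
    ring
  simp_rw [h]
  rw [integral_const_mul, integral_gaussian]
  have hpos : 0 < 1/2 - t := by linarith
  rw [show π / (1/2 - t) = (2*π) * (1-2*t)⁻¹ by field_simp]
  rw [Real.sqrt_mul (by positivity : (0:ℝ) ≤ 2*π), Real.sqrt_inv, ← mul_assoc,
    inv_mul_cancel₀ (Real.sqrt_pos.mpr (by positivity)).ne', one_mul]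

/-- The complex mgf of the Gaussian: `∫ exp (w x) dγ = exp (w²/2)`. -/
lemma integral_cexp_lin (w : ℂ) :
    ∫ x, Complex.exp (w * x) ∂γ = Complex.exp (w^2/2) := by
  rw [integral_gauss]
  have h : ∀ x : ℝ, ((√(2*π))⁻¹ * rexp (-x^2/2)) • Complex.exp (w * x)
      = ((√(2*π))⁻¹ : ℂ) * Complex.exp ((-(1/2) : ℂ) * x^2 + w * x + 0) := by
    intro x
    rw [Complex.real_smul, Complex.ofReal_mul, Complex.ofReal_inv, Complex.ofReal_exp,
      mul_assoc, ← Complex.exp_add]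
    congr 2
    push_cast
    ring
  simp_rw [h]
  rw [integral_const_mul, integral_cexp_quadratic (by norm_num : (-(1/2):ℂ).re < 0) w 0]
  have h2 : ((π : ℂ) / - -(1/2)) = ((2*π : ℝ) : ℂ) := by push_cast; ring
  rw [h2]
  have h3 : ((2*π:ℝ):ℂ) ^ (1/2 : ℂ) = ((√(2*π) : ℝ) : ℂ) := by
    rw [show (1/2:ℂ) = ((1/2:ℝ):ℂ) by norm_num, ← Complex.ofReal_cpow (by positivity),
      ← Real.sqrt_eq_rpow]
  rw [h3, ← mul_assoc,
    inv_mul_cancel₀ (Complex.ofReal_ne_zero.mpr (by positivity : (0:ℝ) < √(2*π)).ne'), one_mul]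
  congr 1
  ring

lemma integral_exp_lin (s : ℝ) : ∫ x, rexp (s * x) ∂γ = rexp (s^2/2) := by
  have key := integral_cexp_lin (s : ℂ)
  have heq : ∫ x, Complex.exp ((s:ℂ) * x) ∂γ = ((∫ x, rexp (s * x) ∂γ : ℝ) : ℂ) := by
    calc ∫ x, Complex.exp ((s:ℂ) * x) ∂γ = ∫ x, ((rexp (s*x) : ℝ) : ℂ) ∂γ := by
          congr 1; ext x
          rw [show ((s:ℂ) * (x:ℂ)) = ((s*x : ℝ) : ℂ) by push_cast; ring, ← Complex.ofReal_exp]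
      _ = _ := integral_ofReal
  rw [heq] at key
  have key2 : ((∫ x, rexp (s * x) ∂γ : ℝ) : ℂ) = ((rexp (s^2/2) : ℝ) : ℂ) := by
    rw [key, Complex.ofReal_exp]
    congr 1
    push_cast
    ring
  exact_mod_cast key2

lemma integral_cexp_imag (b : ℝ) :
    ∫ x, Complex.exp ((b * Complex.I) * x) ∂γ = Complex.exp (-(b:ℂ)^2/2) := by
  rw [integral_cexp_lin]
  congr 1
  rw [mul_pow, Complex.I_sq]
  ring

variable {𝕜 : Type*} [RCLike 𝕜] {α : Type*} [MeasurableSpace α]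

/-- Fubini for a finite product of copies of a measure: integral of a product. -/
theorem integral_pi_prod (μ : Measure α) [SigmaFinite μ] :
    ∀ {n : ℕ} (f : Fin n → α → 𝕜),
    ∫ x : Fin n → α, ∏ i, f i (x i) ∂(Measure.pi fun _ => μ) = ∏ i, ∫ x, f i x ∂μ := by
  intro n
  induction n with
  | zero =>
    intro f
    simp only [Finset.univ_eq_empty, Finset.prod_empty, integral_const, pi_empty_univ,
      ENNReal.toReal_one, measureReal_def, smul_eq_mul, mul_one, one_smul]
  | succ n ih =>
    intro f
    calc
      ∫ x : Fin (n+1) → α, ∏ i, f i (x i) ∂(Measure.pi fun _ => μ)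
          = ∫ p : α × (Fin n → α), f 0 p.1 * ∏ i : Fin n, f (Fin.succ i) (p.2 i)
            ∂(μ.prod (Measure.pi fun _ => μ)) := by
        rw [← ((measurePreserving_piFinSuccAbove (fun _ : Fin (n+1) => μ) 0).symm).integral_comp']
        congr 1
        ext p
        rw [Fin.prod_univ_succ]
        simp only [MeasurableEquiv.piFinSuccAbove_symm_apply, Fin.insertNthEquiv,
          Equiv.coe_fn_mk, Fin.insertNth_zero, Fin.cons_zero, Fin.cons_succ,
          Fin.zero_succAbove, cast_eq]
      _ = (∫ x, f 0 x ∂μ) * ∏ i : Fin n, ∫ x, f (Fin.succ i) x ∂μ := by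
        rw [show (∫ p : α × (Fin n → α), f 0 p.1 * ∏ i : Fin n, f (Fin.succ i) (p.2 i)
            ∂(μ.prod (Measure.pi fun _ => μ)))
          = (∫ x, f 0 x ∂μ) * ∫ y : Fin n → α, ∏ i : Fin n, f (Fin.succ i) (y i)
            ∂(Measure.pi fun _ => μ)
          from integral_prod_mul (f 0) (fun y : Fin n → α => ∏ i : Fin n, f (Fin.succ i) (y i)),
          ih]
      _ = ∏ i, ∫ x, f i x ∂μ := by rw [Fin.prod_univ_succ]

/-- A product of integrable functions of separate coordinates is integrable. -/
theorem integrable_pi_prod (μ : Measure α) [SigmaFinite μ] :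
    ∀ {n : ℕ} (f : Fin n → α → 𝕜), (∀ i, Integrable (f i) μ) →
    Integrable (fun x : Fin n → α => ∏ i, f i (x i)) (Measure.pi fun _ => μ) := by
  intro n
  induction n with
  | zero =>
    intro f _
    have : IsFiniteMeasure (Measure.pi fun _ : Fin 0 => μ) :=
      ⟨by rw [pi_empty_univ]; exact ENNReal.one_lt_top⟩
    simp only [Finset.univ_eq_empty, Finset.prod_empty]
    exact integrable_const _
  | succ n ih =>
    intro f hf
    have h := (measurePreserving_piFinSuccAbove (fun _ : Fin (n+1) => μ) 0).symm
    rw [← h.integrable_comp_emb (MeasurableEquiv.measurableEmbedding _)]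
    have heq : ((fun x : Fin (n+1) → α => ∏ i, f i (x i)) ∘
        ⇑(MeasurableEquiv.piFinSuccAbove (fun _ => α) 0).symm)
        = fun p : α × (Fin n → α) => f 0 p.1 * ∏ i : Fin n, f (Fin.succ i) (p.2 i) := by
      ext p
      rw [Function.comp_apply, Fin.prod_univ_succ]
      simp only [MeasurableEquiv.piFinSuccAbove_symm_apply, Fin.insertNthEquiv,
        Equiv.coe_fn_mk, Fin.insertNth_zero, Fin.cons_zero, Fin.cons_succ,
        Fin.zero_succAbove, cast_eq]
    rw [heq]
    exact Integrable.mul_prod (hf 0) (ih (fun i => f (Fin.succ i)) (fun i => hf (Fin.succ i)))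

variable {m : ℕ}

/-- the product Gaussian on `Fin m → ℝ`. -/
noncomputable def ν (m : ℕ) : Measure (Fin m → ℝ) := Measure.pi fun _ => γ

instance : IsProbabilityMeasure (ν m) := by unfold ν; infer_instance

lemma measurable_Y (u : Fin m → ℝ) : Measurable (fun row : Fin m → ℝ => ∑ j, u j * row j) := by
  fun_prop

section Key

variable (u : Fin m → ℝ) (hu : ∑ j, u j ^ 2 = 1) {t : ℝ} (ht : t < 1/2)

include hu ht in
lemma key_nonneg (ht0 : 0 ≤ t) :
    Integrable (fun row : Fin m → ℝ => rexp (t * (∑ j, u j * row j)^2)) (ν m) ∧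
    ∫ row, rexp (t * (∑ j, u j * row j)^2) ∂(ν m) = (√(1-2*t))⁻¹ := by
  set Y : (Fin m → ℝ) → ℝ := fun row => ∑ j, u j * row j with hY
  set c : ℝ := √(2*t) with hc
  have hc2 : c^2 = 2*t := Real.sq_sqrt (by linarith)
  set F : ℝ × (Fin m → ℝ) → ℝ := fun p => rexp ((c * p.1) * Y p.2) with hF
  have hFmeas : Measurable F := by
    apply Real.measurable_exp.comp
    exact (measurable_const.mul measurable_fst).mul ((measurable_Y u).comp measurable_snd)
  -- per-z factorization over rows
  have hfact : ∀ z : ℝ, (fun row => F (z, row))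
      = fun row : Fin m → ℝ => ∏ j, rexp ((c * z * u j) * row j) := by
    intro z
    ext row
    rw [hF]
    simp only
    rw [← Real.exp_sum]
    congr 1
    rw [hY]
    simp only
    rw [Finset.mul_sum]
    exact Finset.sum_congr rfl fun j _ => by ring
  have h1 : ∀ z : ℝ, Integrable (fun row => F (z, row)) (ν m) := by
    intro z
    rw [hfact z]
    exact integrable_pi_prod γ _ (fun j => integrable_exp_lin _)
  have h2 : ∀ z : ℝ, ∫ row, F (z, row) ∂(ν m) = rexp (t * z^2) := by
    intro z
    rw [hfact z]
    show (∫ row : Fin m → ℝ, ∏ j, rexp ((c * z * u j) * row j)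
      ∂(Measure.pi fun _ => γ)) = rexp (t * z^2)
    rw [integral_pi_prod γ (fun j => fun x : ℝ => rexp ((c * z * u j) * x))]
    have : ∀ j : Fin m, ∫ x, rexp ((c * z * u j) * x) ∂γ = rexp ((c * z * u j)^2/2) :=
      fun j => integral_exp_lin _
    rw [Finset.prod_congr rfl (fun j _ => this j), ← Real.exp_sum]
    congr 1
    have : ∑ j, (c * z * u j)^2/2 = (c^2 * z^2/2) * ∑ j, u j ^2 := by
      rw [Finset.mul_sum]
      exact Finset.sum_congr rfl fun j _ => by ring
    rw [this, hu, hc2]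
    ring
  have h3 : Integrable F (γ.prod (ν m)) := by
    rw [integrable_prod_iff hFmeas.aestronglyMeasurable]
    constructor
    · exact Filter.Eventually.of_forall h1
    · have : (fun z => ∫ row, ‖F (z, row)‖ ∂(ν m)) = fun z => rexp (t * z^2) := by
        ext z
        rw [show (fun row => ‖F (z, row)‖) = fun row => F (z, row) from
          funext fun row => Real.norm_of_nonneg (Real.exp_nonneg _), h2 z]
      rw [this]
      exact integrable_exp_quad ht
  have h4 : ∀ row, ∫ z, F (z, row) ∂γ = rexp (t * (Y row)^2) := by
    intro row
    have : (fun z => F (z, row)) = fun z => rexp ((c * Y row) * z) := by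
      ext z; rw [hF]; simp only; ring_nf
    rw [this, integral_exp_lin]
    congr 1
    rw [show (c * Y row)^2 = c^2 * (Y row)^2 by ring, hc2]
    ring
  constructor
  · have := (h3.swap).integral_prod_left
    refine this.congr (Filter.Eventually.of_forall fun row => ?_)
    simp only [Function.comp_apply, Prod.swap]
    exact h4 row
  · have swap := integral_integral_swap (f := fun z row => F (z, row)) (μ := γ) (ν := ν m) h3
    calc ∫ row, rexp (t * (Y row)^2) ∂(ν m) = ∫ row, ∫ z, F (z, row) ∂γ ∂(ν m) := by
          exact integral_congr_ae (Filter.Eventually.of_forall fun row => (h4 row).symm)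
      _ = ∫ z, ∫ row, F (z, row) ∂(ν m) ∂γ := swap.symm
      _ = ∫ z, rexp (t * z^2) ∂γ :=
          integral_congr_ae (Filter.Eventually.of_forall fun z => h2 z)
      _ = (√(1-2*t))⁻¹ := integral_exp_quad ht

include hu in
lemma key_neg (ht0 : t < 0) :
    Integrable (fun row : Fin m → ℝ => rexp (t * (∑ j, u j * row j)^2)) (ν m) ∧
    ∫ row, rexp (t * (∑ j, u j * row j)^2) ∂(ν m) = (√(1-2*t))⁻¹ := by
  set Y : (Fin m → ℝ) → ℝ := fun row => ∑ j, u j * row j with hY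
  set b : ℝ := √(-2*t) with hb
  have hb2 : b^2 = -2*t := Real.sq_sqrt (by linarith)
  set F : ℝ × (Fin m → ℝ) → ℂ := fun p => Complex.exp (((b * p.1 * Y p.2 : ℝ) : ℂ) * Complex.I)
    with hF
  have hFmeas : Measurable F := by
    apply Complex.measurable_exp.comp
    apply Measurable.mul _ measurable_const
    apply Complex.measurable_ofReal.comp
    exact (measurable_const.mul measurable_fst).mul ((measurable_Y u).comp measurable_snd)
  have hFnorm : ∀ p, ‖F p‖ = 1 := by
    intro p
    rw [hF]
    simp only [Complex.norm_exp]
    simp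
  have h3 : Integrable F (γ.prod (ν m)) := by
    refine Integrable.mono' (integrable_const 1) hFmeas.aestronglyMeasurable ?_
    exact Filter.Eventually.of_forall fun p => le_of_eq (hFnorm p)
  -- identify the inner integrals
  have harg : ∀ (a x : ℝ), ((a * x : ℝ) : ℂ) * Complex.I = ((a : ℝ) * Complex.I) * (x : ℝ) := by
    intro a x; push_cast; ring
  have h2 : ∀ z : ℝ, ∫ row, F (z, row) ∂(ν m) = Complex.exp (((t * z^2 : ℝ) : ℂ)) := by
    intro z
    have hfact : (fun row => F (z, row))
        = fun row : Fin m → ℝ => ∏ j, Complex.exp ((((b * z * u j : ℝ)) * Complex.I) * (row j : ℝ)) := by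
      ext row
      rw [hF]
      simp only
      rw [← Complex.exp_sum]
      congr 1
      rw [hY]
      simp only
      push_cast
      simp only [Finset.mul_sum, Finset.sum_mul]
      exact Finset.sum_congr rfl fun j _ => by ring
    rw [hfact]
    show (∫ row : Fin m → ℝ, ∏ j, Complex.exp ((((b * z * u j : ℝ)) * Complex.I) * (row j : ℝ))
      ∂(Measure.pi fun _ => γ)) = _
    rw [integral_pi_prod γ (fun j => fun x : ℝ => Complex.exp ((((b * z * u j : ℝ)) * Complex.I) * (x : ℝ)))]
    have : ∀ j : Fin m, (∫ x : ℝ, Complex.exp ((((b * z * u j : ℝ)) * Complex.I) * (x : ℝ)) ∂γ)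
        = Complex.exp (-((b * z * u j : ℝ) : ℂ)^2/2) := fun j => integral_cexp_imag _
    rw [Finset.prod_congr rfl (fun j _ => this j), ← Complex.exp_sum]
    congr 1
    have : ∑ j, (-((b * z * u j : ℝ) : ℂ)^2/2) = (-((b:ℂ))^2 * ((z:ℂ))^2/2) * ∑ j, ((u j : ℝ):ℂ) ^2 := by
      rw [Finset.mul_sum]
      refine Finset.sum_congr rfl fun j _ => ?_
      push_cast
      ring
    rw [this]
    have husum : ∑ j, ((u j : ℝ):ℂ) ^2 = 1 := by
      have := hu
      exact_mod_cast congrArg (fun r : ℝ => (r : ℂ)) this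
    rw [husum, mul_one]
    have hb2' : ((b:ℝ):ℂ)^2 = ((-2*t : ℝ):ℂ) := by exact_mod_cast congrArg (fun r : ℝ => (r : ℂ)) hb2
    rw [show (-((b:ℂ))^2 * ((z:ℂ))^2/2) = -(((b:ℝ):ℂ)^2) * ((z:ℂ))^2/2 by ring, hb2']
    push_cast
    ring
  have h4 : ∀ row, ∫ z, F (z, row) ∂γ = Complex.exp (((t * (Y row)^2 : ℝ) : ℂ)) := by
    intro row
    have : (fun z => F (z, row)) = fun z : ℝ => Complex.exp ((((b * Y row : ℝ)) * Complex.I) * (z : ℝ)) := by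
      ext z
      rw [hF]
      simp only
      push_cast
      ring_nf
    rw [this, integral_cexp_imag]
    congr 1
    have hb2' : ((b:ℝ):ℂ)^2 = ((-2*t : ℝ):ℂ) := by exact_mod_cast congrArg (fun r : ℝ => (r : ℂ)) hb2
    rw [show -((b * Y row : ℝ):ℂ)^2/2 = -(((b:ℝ):ℂ)^2) * ((Y row : ℝ):ℂ)^2/2 by push_cast; ring, hb2']
    push_cast
    ring
  have hint : Integrable (fun row : Fin m → ℝ => rexp (t * (Y row)^2)) (ν m) := by
    refine Integrable.mono' (integrable_const 1) ?_ ?_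
    · apply Measurable.aestronglyMeasurable
      exact Real.measurable_exp.comp ((measurable_const.mul ((measurable_Y u).pow_const 2)))
    · refine Filter.Eventually.of_forall fun row => ?_
      rw [Real.norm_of_nonneg (Real.exp_nonneg _)]
      rw [show (1:ℝ) = rexp 0 from (Real.exp_zero).symm]
      apply Real.exp_le_exp.mpr
      have : 0 ≤ (Y row)^2 := sq_nonneg _
      nlinarith
  refine ⟨hint, ?_⟩
  have swap := integral_integral_swap (f := fun z row => F (z, row)) (μ := γ) (ν := ν m) h3
  have hchain : ∫ row, ((rexp (t * (Y row)^2) : ℝ) : ℂ) ∂(ν m) = (((√(1-2*t))⁻¹ : ℝ) : ℂ) := by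
    calc ∫ row, ((rexp (t * (Y row)^2) : ℝ) : ℂ) ∂(ν m)
        = ∫ row, ∫ z, F (z, row) ∂γ ∂(ν m) := by
          refine integral_congr_ae (Filter.Eventually.of_forall fun row => ?_)
          dsimp only
          rw [h4 row, Complex.ofReal_exp]
      _ = ∫ z, ∫ row, F (z, row) ∂(ν m) ∂γ := swap.symm
      _ = ∫ z, ((rexp (t * z^2) : ℝ) : ℂ) ∂γ := by
          refine integral_congr_ae (Filter.Eventually.of_forall fun z => ?_)
          dsimp only
          rw [h2 z, Complex.ofReal_exp]
      _ = ((∫ z, rexp (t * z^2) ∂γ : ℝ) : ℂ) := integral_ofReal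
      _ = (((√(1-2*t))⁻¹ : ℝ) : ℂ) := by rw [integral_exp_quad (by linarith : t < 1/2)]
  have h6 := (integral_ofReal (𝕜 := ℂ) (f := fun row => rexp (t * (Y row)^2))
    (μ := ν m)).symm.trans hchain
  have h7 : (∫ x : Fin m → ℝ, rexp (t * Y x ^ 2) ∂(ν m)) = (√(1-2*t))⁻¹ := Complex.ofReal_inj.mp h6
  exact h7

include hu ht in
lemma key :
    Integrable (fun row : Fin m → ℝ => rexp (t * (∑ j, u j * row j)^2)) (ν m) ∧
    ∫ row, rexp (t * (∑ j, u j * row j)^2) ∂(ν m) = (√(1-2*t))⁻¹ := by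
  rcases lt_or_ge t 0 with h | h
  · exact key_neg u hu h
  · exact key_nonneg u hu ht h

end Key

/-- probability space for the random matrix -/
noncomputable def P (k m : ℕ) : Measure (Fin k → Fin m → ℝ) := Measure.pi fun _ => ν m
instance {k m : ℕ} : IsProbabilityMeasure (P k m) := by unfold P; infer_instance

/-- the (scaled) squared norm of the image of the unit vector `u` -/
noncomputable def S {k m : ℕ} (u : Fin m → ℝ) (ω : Fin k → Fin m → ℝ) : ℝ :=
  ∑ i, (∑ j, u j * ω i j)^2

section Tail

variable {k m : ℕ} (u : Fin m → ℝ) (hu : ∑ j, u j ^ 2 = 1)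

include hu in
lemma mgf_S {t : ℝ} (ht : t < 1/2) :
    Integrable (fun ω => rexp (t * S u ω)) (P k m) ∧
    mgf (S u) (P k m) t = ((√(1-2*t))⁻¹)^k := by
  have hexp : ∀ ω : Fin k → Fin m → ℝ, rexp (t * S u ω)
      = ∏ i, rexp (t * (∑ j, u j * ω i j)^2) := by
    intro ω
    rw [← Real.exp_sum]
    congr 1
    rw [S, Finset.mul_sum]
  constructor
  · rw [show (fun ω => rexp (t * S u ω))
        = fun ω : Fin k → Fin m → ℝ => ∏ i, rexp (t * (∑ j, u j * ω i j)^2)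
      from funext hexp]
    exact integrable_pi_prod (ν m) _ (fun i => (key u hu ht).1)
  · rw [mgf]
    rw [show (fun ω => rexp (t * S u ω))
        = fun ω : Fin k → Fin m → ℝ => ∏ i, rexp (t * (∑ j, u j * ω i j)^2)
      from funext hexp]
    show (∫ ω : Fin k → Fin m → ℝ, ∏ i, rexp (t * (∑ j, u j * ω i j)^2)
      ∂(Measure.pi fun _ => ν m)) = _
    rw [integral_pi_prod (ν m) (fun i => fun row : Fin m → ℝ => rexp (t * (∑ j, u j * row j)^2))]
    rw [Finset.prod_congr rfl (fun i _ => (key u hu ht).2), Finset.prod_const,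
      Finset.card_univ, Fintype.card_fin]

include hu in
lemma tail_upper {ε : ℝ} (hε : ε ∈ Set.Ioo (0:ℝ) 1) :
    ((P k m) {ω | (1+ε) * k ≤ S u ω}).toReal ≤ rexp (-(k * ((3*ε^2-2*ε^3)/12))) := by
  obtain ⟨hε0, hε1⟩ := hε
  set t : ℝ := ε/(2*(1+ε)) with htdef
  have ht0 : 0 ≤ t := by positivity
  have ht : t < 1/2 := by
    rw [htdef, div_lt_iff₀ (by linarith : (0:ℝ) < 2*(1+ε))]
    linarith
  have hch := measure_ge_le_exp_mul_mgf (X := S u) (μ := P k m) (t := t) ((1+ε) * k) ht0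
    (mgf_S u hu ht).1
  rw [(mgf_S u hu ht).2] at hch
  refine hch.trans ?_
  have h1 : (1 - 2*t) = (1+ε)⁻¹ := by
    rw [htdef]
    have hne : (1+ε) ≠ 0 := by linarith
    field_simp
    ring
  have h2 : ((√(1-2*t))⁻¹ : ℝ) = rexp (Real.log (1+ε) * (1/2)) := by
    rw [h1, Real.sqrt_inv, inv_inv, Real.sqrt_eq_rpow,
      Real.rpow_def_of_pos (by linarith : (0:ℝ) < 1+ε)]
  rw [h2, ← Real.exp_nat_mul, ← Real.exp_add]
  apply Real.exp_le_exp.mpr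
  have hlog : Real.log (1+ε) ≤ ε - ε^2/2 + ε^3/3 := log_cubic (by linarith)
  have ht1 : t * (1+ε) = ε/2 := by
    rw [htdef]
    field_simp
  have hk0 : (0:ℝ) ≤ (k:ℝ) := Nat.cast_nonneg k
  have hexpand : -t * ((1+ε) * k) = -(ε/2) * k := by
    rw [show -t * ((1+ε) * (k:ℝ)) = -(t * (1+ε)) * k by ring, ht1]
  rw [hexpand]
  nlinarith [mul_le_mul_of_nonneg_left hlog hk0]

include hu in
lemma tail_lower {ε : ℝ} (hε : ε ∈ Set.Ioo (0:ℝ) 1) :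
    ((P k m) {ω | S u ω ≤ (1-ε) * k}).toReal ≤ rexp (-(k * ((3*ε^2-2*ε^3)/12))) := by
  obtain ⟨hε0, hε1⟩ := hε
  set t : ℝ := -(ε/(2*(1-ε))) with htdef
  have ht0 : t ≤ 0 := by
    rw [htdef, neg_nonpos]
    apply div_nonneg hε0.le
    linarith
  have ht : t < 1/2 := lt_of_le_of_lt ht0 (by norm_num)
  have hch := measure_le_le_exp_mul_mgf (X := S u) (μ := P k m) (t := t) ((1-ε) * k) ht0
    (mgf_S u hu ht).1
  rw [(mgf_S u hu ht).2] at hch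
  refine hch.trans ?_
  have h1 : (1 - 2*t) = (1-ε)⁻¹ := by
    rw [htdef]
    have hne : (1-ε) ≠ 0 := by intro h; rw [sub_eq_zero] at h; exact absurd h.symm (by linarith)
    field_simp
    ring
  have h2 : ((√(1-2*t))⁻¹ : ℝ) = rexp (Real.log (1-ε) * (1/2)) := by
    rw [h1, Real.sqrt_inv, inv_inv, Real.sqrt_eq_rpow,
      Real.rpow_def_of_pos (by linarith : (0:ℝ) < 1-ε)]
  rw [h2, ← Real.exp_nat_mul, ← Real.exp_add]
  apply Real.exp_le_exp.mpr
  have hlog : Real.log (1-ε) ≤ -ε - ε^2/2 - ε^3/3 := by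
    have := log_cubic (x := -ε) (by linarith)
    rw [show (1 + -ε) = 1 - ε by ring] at this
    calc Real.log (1-ε) ≤ -ε - (-ε)^2/2 + (-ε)^3/3 := this
      _ = -ε - ε^2/2 - ε^3/3 := by ring
  have ht1 : -t * (1-ε) = ε/2 := by
    rw [htdef, neg_neg]
    have hne : (1-ε) ≠ 0 := by intro h; rw [sub_eq_zero] at h; exact absurd h.symm (by linarith)
    field_simp
  have hk0 : (0:ℝ) ≤ (k:ℝ) := Nat.cast_nonneg k
  have hexpand : -t * ((1-ε) * k) = (ε/2) * k := by
    rw [show -t * ((1-ε) * (k:ℝ)) = (-t * (1-ε)) * k by ring, ht1]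
  rw [hexpand]
  nlinarith [mul_le_mul_of_nonneg_left hlog hk0, mul_nonneg hk0 (pow_nonneg hε0.le 3)]

end Tail

/-- the random linear map built from the matrix `w` -/
noncomputable def jlmap (k m : ℕ) (w : Fin k → Fin m → ℝ) :
    EuclideanSpace ℝ (Fin m) →ₗ[ℝ] EuclideanSpace ℝ (Fin k) where
  toFun x := WithLp.toLp 2 (fun i => (√k)⁻¹ * ∑ j, w i j * x j)
  map_add' x y := by
    ext i
    simp only [PiLp.add_apply, mul_add, Finset.sum_add_distrib]
  map_smul' c x := by
    ext i
    simp only [PiLp.smul_apply, RingHom.id_apply, smul_eq_mul, Finset.mul_sum]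
    exact Finset.sum_congr rfl fun j _ => by ring

lemma jlmap_apply (k m : ℕ) (w : Fin k → Fin m → ℝ) (x : EuclideanSpace ℝ (Fin m)) (i : Fin k) :
    jlmap k m w x i = (√k)⁻¹ * ∑ j, w i j * x j := rfl

lemma euclidean_sq_norm {n : ℕ} (v : EuclideanSpace ℝ (Fin n)) :
    ‖v‖^2 = ∑ i, (v i)^2 := by
  rw [EuclideanSpace.norm_eq, Real.sq_sqrt (Finset.sum_nonneg fun i _ => sq_nonneg _)]
  exact Finset.sum_congr rfl fun i _ => by rw [Real.norm_eq_abs, sq_abs]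

/-- card of strict-upper-triangle pairs -/
lemma two_mul_card_pairs (N : ℕ) :
    2 * (Finset.univ.filter fun p : Fin N × Fin N => p.1 < p.2).card = N * N - N := by
  have hswap : (Finset.univ.filter fun p : Fin N × Fin N => p.1 < p.2).card
      = (Finset.univ.filter fun p : Fin N × Fin N => p.2 < p.1).card := by
    apply Finset.card_bij' (fun p _ => Prod.swap p) (fun p _ => Prod.swap p)
    · intro p hp
      simp only [Finset.mem_filter, Finset.mem_univ, true_and] at hp ⊢
      exact hp
    · intro p hp
      simp only [Finset.mem_filter, Finset.mem_univ, true_and] at hp ⊢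
      exact hp
    · intro p _; simp
    · intro p _; simp
  have hunion : (Finset.univ.filter fun p : Fin N × Fin N => p.1 < p.2)
      ∪ (Finset.univ.filter fun p : Fin N × Fin N => p.2 < p.1)
      = (Finset.univ : Finset (Fin N)).offDiag := by
    ext p
    simp only [Finset.mem_union, Finset.mem_filter, Finset.mem_univ, true_and,
      Finset.mem_offDiag]
    constructor
    · rintro (h | h)
      · exact ne_of_lt h
      · exact (ne_of_lt h).symm
    · intro h
      rcases lt_or_gt_of_ne h with h' | h'
      · exact Or.inl h'
      · exact Or.inr h'
  have hdisj : Disjoint (Finset.univ.filter fun p : Fin N × Fin N => p.1 < p.2)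
      (Finset.univ.filter fun p : Fin N × Fin N => p.2 < p.1) := by
    rw [Finset.disjoint_filter]
    intro p _ h1 h2
    exact absurd h2 (not_lt.mpr h1.le)
  have hcard := Finset.card_union_of_disjoint hdisj
  rw [hunion] at hcard
  rw [Finset.offDiag_card, Finset.card_univ, Fintype.card_fin] at hcard
  omega

theorem johnson_lindenstrauss_aux
    (ε : ℝ) (hε : ε ∈ Set.Ioo (0 : ℝ) 1) (N : ℕ) (hN : 2 ≤ N)
    (m k : ℕ) (hk : 0 < k)
    (hkN : (24 / (3 * ε ^ 2 - 2 * ε ^ 3)) * Real.log N ≤ (k : ℝ))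
    (A : Finset (EuclideanSpace ℝ (Fin m))) (hA : A.card = N) :
    ∃ f : EuclideanSpace ℝ (Fin m) →ₗ[ℝ] EuclideanSpace ℝ (Fin k),
      ∀ x ∈ A, ∀ y ∈ A,
        (1 - ε) * ‖x - y‖ ^ 2 ≤ ‖f x - f y‖ ^ 2 ∧
          ‖f x - f y‖ ^ 2 ≤ (1 + ε) * ‖x - y‖ ^ 2 := by
  obtain ⟨hε0, hε1⟩ := hε
  set δ : ℝ := (3*ε^2-2*ε^3)/12 with hδdef
  have hδ0 : 0 < δ := by
    rw [hδdef]
    nlinarith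
  have hN0 : (0:ℝ) < N := by
    have : (2:ℝ) ≤ N := by exact_mod_cast hN
    linarith
  have hlogN : 0 < Real.log N := Real.log_pos (by exact_mod_cast (by omega : 1 < N))
  -- k δ ≥ 2 log N
  have hkδ : 2 * Real.log N ≤ k * δ := by
    have h24 : (24 / (3 * ε ^ 2 - 2 * ε ^ 3)) = 2 / δ := by
      rw [hδdef]
      rw [div_div_eq_mul_div]
      congr 1
      ring
    rw [h24] at hkN
    calc 2 * Real.log N = (2 / δ * Real.log N) * δ := by
          field_simp
      _ ≤ k * δ := by
          apply mul_le_mul_of_nonneg_right hkN hδ0.le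
  have hexp : rexp (-(k * δ)) ≤ ((N:ℝ)^2)⁻¹ := by
    have h1 : rexp (-(k * δ)) ≤ rexp (-(2 * Real.log N)) :=
      Real.exp_le_exp.mpr (by linarith)
    refine h1.trans_eq ?_
    rw [show -(2 * Real.log N) = -Real.log N + -Real.log N by ring, Real.exp_add,
      Real.exp_neg, Real.exp_log hN0]
    rw [sq]
    rw [mul_inv]
  -- enumeration of points
  set e : Fin N ≃ {x // x ∈ A} := (finCongr hA.symm).trans A.equivFin.symm with hedef
  set pt : Fin N → EuclideanSpace ℝ (Fin m) := fun i => (e i : EuclideanSpace ℝ (Fin m))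
    with hptdef
  have hptA : ∀ i, pt i ∈ A := fun i => (e i).2
  have hptinj : Function.Injective pt := fun i j h => e.injective (Subtype.ext h)
  -- unit vectors for pairs
  set up : Fin N × Fin N → (Fin m → ℝ) :=
    fun p => fun j => ‖pt p.1 - pt p.2‖⁻¹ * ((pt p.1 - pt p.2 : EuclideanSpace ℝ (Fin m)) j)
    with hupdef
  have hup : ∀ p : Fin N × Fin N, p.1 ≠ p.2 → ∑ j, up p j ^ 2 = 1 := by
    intro p hp
    have hd : (pt p.1 - pt p.2 : EuclideanSpace ℝ (Fin m)) ≠ 0 :=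
      sub_ne_zero.mpr (fun h => hp (hptinj h))
    have hn : ‖pt p.1 - pt p.2‖ ≠ 0 := norm_ne_zero_iff.mpr hd
    have : ∑ j, up p j ^ 2
        = ‖pt p.1 - pt p.2‖⁻¹^2 * ∑ j, ((pt p.1 - pt p.2 : EuclideanSpace ℝ (Fin m)) j)^2 := by
      rw [Finset.mul_sum]
      exact Finset.sum_congr rfl fun j _ => by rw [hupdef]; ring
    rw [this, ← euclidean_sq_norm]
    field_simp
  -- bad events
  set Bad : Fin N × Fin N → Set (Fin k → Fin m → ℝ) :=
    fun p => {ω | ¬((1-ε) * k ≤ S (up p) ω ∧ S (up p) ω ≤ (1+ε) * k)} with hBaddef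
  set Pairs : Finset (Fin N × Fin N) := Finset.univ.filter fun p => p.1 < p.2 with hPairsdef
  -- measure bound for each bad event
  have hBadBound : ∀ p ∈ Pairs, (P k m) (Bad p) ≤ ENNReal.ofReal (2 * rexp (-(k * δ))) := by
    intro p hp
    have hne : p.1 ≠ p.2 := ne_of_lt (Finset.mem_filter.mp hp).2
    have hsub : Bad p ⊆ {ω | S (up p) ω ≤ (1-ε) * k} ∪ {ω | (1+ε) * k ≤ S (up p) ω} := by
      intro ω hω
      rw [hBaddef] at hω
      simp only [Set.mem_setOf_eq, not_and_or, not_le] at hω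
      rcases hω with h | h
      · exact Or.inl (le_of_lt h)
      · exact Or.inr (le_of_lt h)
    refine (measure_mono hsub).trans ((measure_union_le _ _).trans ?_)
    have hl := tail_lower (k := k) (up p) (hup p hne) ⟨hε0, hε1⟩
    have hu' := tail_upper (k := k) (up p) (hup p hne) ⟨hε0, hε1⟩
    have hfin1 : (P k m) {ω | S (up p) ω ≤ (1-ε) * k} ≠ ⊤ := measure_ne_top _ _
    have hfin2 : (P k m) {ω | (1+ε) * k ≤ S (up p) ω} ≠ ⊤ := measure_ne_top _ _
    rw [show (2 : ℝ) * rexp (-(k * δ)) = rexp (-(k * δ)) + rexp (-(k * δ)) by ring,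
      ENNReal.ofReal_add (Real.exp_nonneg _) (Real.exp_nonneg _)]
    exact add_le_add ((ENNReal.le_ofReal_iff_toReal_le hfin1 (Real.exp_nonneg _)).mpr hl)
      ((ENNReal.le_ofReal_iff_toReal_le hfin2 (Real.exp_nonneg _)).mpr hu')
  -- union bound
  have hUnion : (P k m) (⋃ p ∈ Pairs, Bad p) < 1 := by
    refine lt_of_le_of_lt (measure_biUnion_finset_le Pairs Bad) ?_
    calc ∑ p ∈ Pairs, (P k m) (Bad p)
        ≤ ∑ _p ∈ Pairs, ENNReal.ofReal (2 * rexp (-(k * δ))) :=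
          Finset.sum_le_sum hBadBound
      _ = (Pairs.card : ℝ≥0∞) * ENNReal.ofReal (2 * rexp (-(k * δ))) := by
          rw [Finset.sum_const, nsmul_eq_mul]
      _ = ENNReal.ofReal ((Pairs.card : ℝ) * (2 * rexp (-(k * δ)))) := by
          rw [ENNReal.ofReal_mul (Nat.cast_nonneg _), ENNReal.ofReal_natCast]
      _ < 1 := by
        rw [show (1 : ℝ≥0∞) = ENNReal.ofReal 1 by simp]
        apply ENNReal.ofReal_lt_ofReal_iff_of_nonneg
          (mul_nonneg (Nat.cast_nonneg _) (mul_nonneg (by norm_num) (Real.exp_nonneg _))) |>.mpr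
        -- card bound
        have hcard : 2 * (Pairs.card : ℝ) = (N:ℝ) * N - N := by
          have h := two_mul_card_pairs N
          have hle : N ≤ N * N := Nat.le_mul_of_pos_left N (by omega)
          rw [hPairsdef]
          calc 2 * ((Finset.univ.filter fun p : Fin N × Fin N => p.1 < p.2).card : ℝ)
              = ((2 * (Finset.univ.filter fun p : Fin N × Fin N => p.1 < p.2).card : ℕ) : ℝ) := by
                push_cast; ring
            _ = ((N * N - N : ℕ) : ℝ) := by rw [h]
            _ = (N:ℝ) * N - N := by rw [Nat.cast_sub hle]; push_cast; ring
        have hbound : (Pairs.card : ℝ) * (2 * rexp (-(k * δ)))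
            ≤ (Pairs.card : ℝ) * (2 * ((N:ℝ)^2)⁻¹) := by
          apply mul_le_mul_of_nonneg_left _ (Nat.cast_nonneg _)
          apply mul_le_mul_of_nonneg_left hexp (by norm_num)
        refine hbound.trans_lt ?_
        rw [show (Pairs.card : ℝ) * (2 * ((N:ℝ)^2)⁻¹) = (2 * Pairs.card) * ((N:ℝ)^2)⁻¹ by ring,
          hcard, ← div_eq_mul_inv, div_lt_one (by positivity : (0:ℝ) < (N:ℝ)^2)]
        nlinarith
  -- pick a good ω
  have hexists : ∃ ω, ω ∉ ⋃ p ∈ Pairs, Bad p := by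
    by_contra h
    push_neg at h
    have : (⋃ p ∈ Pairs, Bad p) = Set.univ := Set.eq_univ_iff_forall.mpr h
    rw [this] at hUnion
    simp at hUnion
  obtain ⟨ω, hω⟩ := hexists
  -- the good event for each ordered pair i < j
  have hgood : ∀ p : Fin N × Fin N, p.1 < p.2 →
      (1-ε) * k ≤ S (up p) ω ∧ S (up p) ω ≤ (1+ε) * k := by
    intro p hp
    by_contra h
    exact hω (Set.mem_biUnion (Finset.mem_filter.mpr ⟨Finset.mem_univ _, hp⟩) h)
  -- the map
  refine ⟨jlmap k m ω, ?_⟩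
  -- key computation: for any two distinct indices i < j the bounds hold
  have main : ∀ p : Fin N × Fin N, p.1 < p.2 →
      (1 - ε) * ‖pt p.1 - pt p.2‖ ^ 2 ≤ ‖jlmap k m ω (pt p.1) - jlmap k m ω (pt p.2)‖ ^ 2 ∧
      ‖jlmap k m ω (pt p.1) - jlmap k m ω (pt p.2)‖ ^ 2 ≤ (1 + ε) * ‖pt p.1 - pt p.2‖ ^ 2 := by
    intro p hp
    obtain ⟨hg1, hg2⟩ := hgood p hp
    set d : EuclideanSpace ℝ (Fin m) := pt p.1 - pt p.2 with hddef
    have hd : d ≠ 0 := sub_ne_zero.mpr (fun h => (ne_of_lt hp) (hptinj h))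
    have hn : (0:ℝ) < ‖d‖ := norm_pos_iff.mpr hd
    have himg : jlmap k m ω (pt p.1) - jlmap k m ω (pt p.2) = jlmap k m ω d := by
      rw [hddef, map_sub]
    rw [himg]
    have hcoord : ∀ i : Fin k, (jlmap k m ω d) i = (√k)⁻¹ * (‖d‖ * ∑ j, up p j * ω i j) := by
      intro i
      rw [jlmap_apply]
      congr 1
      rw [Finset.mul_sum]
      refine Finset.sum_congr rfl fun j _ => ?_
      rw [hupdef]
      simp only
      rw [← hddef]
      field_simp
    have hnorm : ‖jlmap k m ω d‖^2 = (k:ℝ)⁻¹ * ‖d‖^2 * S (up p) ω := by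
      rw [euclidean_sq_norm]
      rw [show S (up p) ω = ∑ i, (∑ j, up p j * ω i j)^2 from rfl]
      rw [Finset.mul_sum]
      refine Finset.sum_congr rfl fun i _ => ?_
      rw [hcoord i]
      rw [mul_pow, mul_pow, ← Real.sqrt_inv, Real.sq_sqrt (by positivity)]
      ring
    constructor
    · rw [hnorm]
      calc (1-ε) * ‖d‖^2 = (k:ℝ)⁻¹ * ‖d‖^2 * ((1-ε) * k) := by
            field_simp
        _ ≤ (k:ℝ)⁻¹ * ‖d‖^2 * S (up p) ω := by
            apply mul_le_mul_of_nonneg_left hg1 (by positivity)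
    · rw [hnorm]
      calc (k:ℝ)⁻¹ * ‖d‖^2 * S (up p) ω ≤ (k:ℝ)⁻¹ * ‖d‖^2 * ((1+ε) * k) := by
            apply mul_le_mul_of_nonneg_left hg2 (by positivity)
        _ = (1+ε) * ‖d‖^2 := by
            field_simp
  -- conclude
  intro x hx y hy
  by_cases hxy : x = y
  · subst hxy
    rw [show x - x = (0:EuclideanSpace ℝ (Fin m)) from sub_self x,
      show jlmap k m ω x - jlmap k m ω x = (0:EuclideanSpace ℝ (Fin k)) from sub_self _,
      norm_zero]
    norm_num
  · set i : Fin N := e.symm ⟨x, hx⟩ with hidef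
    set j : Fin N := e.symm ⟨y, hy⟩ with hjdef
    have hpi : pt i = x := by rw [hptdef, hidef]; simp
    have hpj : pt j = y := by rw [hptdef, hjdef]; simp
    have hij : i ≠ j := by
      intro h
      apply hxy
      rw [← hpi, ← hpj, h]
    rcases lt_or_gt_of_ne hij with h | h
    · have := main (i, j) h
      rw [hpi, hpj] at this
      exact this
    · have := main (j, i) h
      rw [hpi, hpj] at this
      rw [norm_sub_rev (y:EuclideanSpace ℝ (Fin m)) x,
        norm_sub_rev (jlmap k m ω y) (jlmap k m ω x)] at this
      exact this


end JLaux

open Real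

/-- **Johnson–Lindenstrauss lemma.** Given any `ε ∈ (0,1)` and an integer `N ≥ 2`,
let `k` be a positive integer satisfying `k ≥ (24 / (3ε² − 2ε³)) · log N`.
Then for any set `A` of `N` points in `ℝ^m` there exists a linear map
`f : ℝ^m → ℝ^k` such that for all `x, y ∈ A`,
`(1−ε)‖x−y‖² ≤ ‖f x − f y‖² ≤ (1+ε)‖x−y‖²`. -/
theorem johnson_lindenstrauss
    (ε : ℝ) (hε : ε ∈ Set.Ioo (0 : ℝ) 1) (N : ℕ) (hN : 2 ≤ N)
    (m k : ℕ) (hk : 0 < k)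
    (hkN : (24 / (3 * ε ^ 2 - 2 * ε ^ 3)) * Real.log N ≤ (k : ℝ))
    (A : Finset (EuclideanSpace ℝ (Fin m))) (hA : A.card = N) :
    ∃ f : EuclideanSpace ℝ (Fin m) →ₗ[ℝ] EuclideanSpace ℝ (Fin k),
      ∀ x ∈ A, ∀ y ∈ A,
        (1 - ε) * ‖x - y‖ ^ 2 ≤ ‖f x - f y‖ ^ 2 ∧
          ‖f x - f y‖ ^ 2 ≤ (1 + ε) * ‖x - y‖ ^ 2 := by
  exact JLaux.johnson_lindenstrauss_aux ε hε N hN m k hk hkN A hA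
end

section
/- Strong consistency of the contaminated Fréchet variance estimator: Let (𝒢, d) be a finite metric space, let X₁, X₂, … be i.i.d. 𝒢-valued random variables with distribution P having unique Fréchet mean μ, and fix t ∈ (0,1). For each N let n = ⌊Nt⌋, let μ̂_{N−n} be a measurable choice of minimizer of ω ↦ (1/(N−n))Σᵢ₌ₙ₊₁^N d²(Xᵢ,ω), and define the contaminated variance V̂ₙᶜ = (1/n)Σᵢ₌₁ⁿ d²(Xᵢ, μ̂_{N−n}). Then V̂ₙᶜ → V = min_{ω∈𝒢} E[d²(X₁,ω)] almost surely as N → ∞. -/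
open MeasureTheory ProbabilityTheory Filter Topology

/-- The split point `n = ⌊N t⌋`. -/
noncomputable def splitPt (t : ℝ) (N : ℕ) : ℕ := ⌊(N : ℝ) * t⌋₊

lemma splitPt_tendsto_atTop {t : ℝ} (ht0 : 0 < t) :
    Tendsto (fun N : ℕ => splitPt t N) atTop atTop :=
  tendsto_nat_floor_atTop.comp (Tendsto.atTop_mul_const ht0 tendsto_natCast_atTop_atTop)

lemma splitPt_div_tendsto {t : ℝ} (ht0 : 0 < t) :
    Tendsto (fun N : ℕ => (splitPt t N : ℝ) / N) atTop (𝓝 t) := by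
  have h1 : Tendsto (fun x : ℝ => (⌊t * x⌋₊ : ℝ) / x) atTop (𝓝 t) :=
    tendsto_nat_floor_mul_div_atTop ht0.le
  have h2 := h1.comp (tendsto_natCast_atTop_atTop (R := ℝ))
  refine h2.congr fun N => ?_
  simp [splitPt, mul_comm, Function.comp]

lemma splitPt_lt {t : ℝ} (ht0 : 0 < t) (ht1 : t < 1) {N : ℕ} (hN : 1 ≤ N) :
    splitPt t N < N := by
  rw [splitPt, Nat.floor_lt (by positivity)]
  have hN0 : (0 : ℝ) < N := by exact_mod_cast hN
  calc (N : ℝ) * t < (N : ℝ) * 1 := mul_lt_mul_of_pos_left ht1 hN0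
    _ = N := mul_one _

/-- Deterministic step: if the prefix Cesàro averages of `a` converge to `L`, then so do the
averages over the second block `[⌊Nt⌋, N)`. -/
lemma block_tendsto {t : ℝ} (ht0 : 0 < t) (ht1 : t < 1) (a : ℕ → ℝ) (L : ℝ)
    (h : Tendsto (fun n : ℕ => (∑ i ∈ Finset.range n, a i) / n) atTop (𝓝 L)) :
    Tendsto (fun N : ℕ => ((N - splitPt t N : ℕ) : ℝ)⁻¹ *
      ∑ i ∈ Finset.Ico (splitPt t N) N, a i) atTop (𝓝 L) := by
  have hnt := splitPt_tendsto_atTop (t := t) ht0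
  have hr := splitPt_div_tendsto (t := t) ht0
  set s : ℕ → ℝ := fun k => ∑ i ∈ Finset.range k, a i with hs
  have h2 : Tendsto (fun N : ℕ => s (splitPt t N) / (splitPt t N : ℝ))
      atTop (𝓝 L) := h.comp hnt
  have h3 : Tendsto (fun N : ℕ =>
      (s N / N - (splitPt t N : ℝ) / N * (s (splitPt t N) / (splitPt t N : ℝ))) /
        (1 - (splitPt t N : ℝ) / N)) atTop (𝓝 ((L - t * L) / (1 - t))) :=
    (h.sub (hr.mul h2)).div (tendsto_const_nhds.sub hr)
      (by intro hq; rw [sub_eq_zero] at hq; linarith)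
  have hlim : (L - t * L) / (1 - t) = L := by
    rw [show L - t * L = L * (1 - t) by ring, mul_div_assoc,
      div_self (by linarith), mul_one]
  rw [hlim] at h3
  refine h3.congr' ?_
  filter_upwards [hnt.eventually_ge_atTop 1, eventually_ge_atTop 1] with N hn1 hN1
  have hltN : splitPt t N < N := splitPt_lt ht0 ht1 hN1
  have hsum : ∑ i ∈ Finset.Ico (splitPt t N) N, a i = s N - s (splitPt t N) :=
    Finset.sum_Ico_eq_sub _ hltN.le
  rw [hsum, Nat.cast_sub hltN.le]
  have ha0 : (splitPt t N : ℝ) ≠ 0 := by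
    have : (1 : ℝ) ≤ (splitPt t N : ℝ) := by exact_mod_cast hn1
    linarith
  have hb0 : (N : ℝ) ≠ 0 := by
    have : (1 : ℝ) ≤ (N : ℝ) := by exact_mod_cast hN1
    linarith
  have hba : (N : ℝ) - (splitPt t N : ℝ) ≠ 0 := by
    have : (splitPt t N : ℝ) < (N : ℝ) := by exact_mod_cast hltN
    intro hq; rw [sub_eq_zero] at hq; linarith
  field_simp

set_option maxHeartbeats 1000000 in
/-- **Strong consistency of the contaminated Fréchet variance estimator.**
Let `(𝒢, d)` be a finite metric space, `X₁, X₂, …` i.i.d. with distribution `P`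
having unique Fréchet mean `μ`, and fix `t ∈ (0,1)`.  For each `N` let
`n = ⌊Nt⌋` and let `μ̂_{N−n}` be a measurable choice of minimizer of
`ω ↦ (1/(N−n)) Σ_{i=n+1}^N d²(Xᵢ,ω)`.  Then the contaminated variance
`V̂ₙᶜ = (1/n) Σ_{i=1}^n d²(Xᵢ, μ̂_{N−n})` converges almost surely to
`V = min_ω E[d²(X₁,ω)]` as `N → ∞`. -/
theorem contaminated_frechet_variance_consistency
    {G : Type*} [MetricSpace G] [Fintype G] [Nonempty G]
    [MeasurableSpace G] [BorelSpace G]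
    {Ω : Type*} [MeasurableSpace Ω] (Pr : Measure Ω) [IsProbabilityMeasure Pr]
    (P : Measure G) [IsProbabilityMeasure P]
    (X : ℕ → Ω → G) (hXmeas : ∀ i, Measurable (X i))
    (hXindep : iIndepFun X Pr)
    (hXdist : ∀ i, Measure.map (X i) Pr = P)
    (μ : G) (hμmin : ∀ c : G, ∫ x, dist x μ ^ 2 ∂P ≤ ∫ x, dist x c ^ 2 ∂P)
    (hμuniq : ∀ c : G, (∀ c' : G, ∫ x, dist x c ^ 2 ∂P ≤ ∫ x, dist x c' ^ 2 ∂P) → c = μ)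
    (t : ℝ) (ht : t ∈ Set.Ioo (0 : ℝ) 1)
    (μB : ℕ → Ω → G) (hμBmeas : ∀ N, Measurable (μB N))
    (hμBmin : ∀ N (ω : Ω) (c : G),
      ((N - splitPt t N : ℕ) : ℝ)⁻¹ *
          ∑ i ∈ Finset.Ico (splitPt t N) N, dist (X i ω) (μB N ω) ^ 2 ≤
        ((N - splitPt t N : ℕ) : ℝ)⁻¹ *
          ∑ i ∈ Finset.Ico (splitPt t N) N, dist (X i ω) c ^ 2) :
    ∀ᵐ ω ∂Pr, Tendsto
      (fun N : ℕ => ((splitPt t N : ℕ) : ℝ)⁻¹ *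
        ∑ i ∈ Finset.range (splitPt t N), dist (X i ω) (μB N ω) ^ 2)
      atTop (𝓝 (⨅ c : G, ∫ x, dist x c ^ 2 ∂P)) := by
  classical
  obtain ⟨ht0, ht1⟩ := ht
  set m : G → ℝ := fun c => ∫ x, dist x c ^ 2 ∂P with hm
  have hinf : (⨅ c : G, ∫ x, dist x c ^ 2 ∂P) = m μ :=
    le_antisymm (ciInf_le (Set.finite_range _).bddBelow μ) (le_ciInf hμmin)
  rw [hinf]
  -- Strong law of large numbers for each fixed `c`.
  have hSLLN : ∀ c : G, ∀ᵐ ω ∂Pr,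
      Tendsto (fun n : ℕ => (∑ i ∈ Finset.range n, dist (X i ω) c ^ 2) / n)
        atTop (𝓝 (m c)) := by
    intro c
    have hg : Measurable (fun x : G => dist x c ^ 2) :=
      (measurable_id.dist measurable_const).pow_const 2
    have hmeas : ∀ i, Measurable (fun ω => dist (X i ω) c ^ 2) :=
      fun i => hg.comp (hXmeas i)
    obtain ⟨C, hC⟩ : ∃ C, ∀ x : G, dist x c ^ 2 ≤ C :=
      ⟨Finset.univ.sup' Finset.univ_nonempty fun x : G => dist x c ^ 2,
        fun x => Finset.le_sup' (f := fun x : G => dist x c ^ 2) (Finset.mem_univ x)⟩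
    have hint : Integrable (fun ω => dist (X 0 ω) c ^ 2) Pr := by
      apply (integrable_const C).mono' (hmeas 0).aestronglyMeasurable
      filter_upwards with ω
      rw [Real.norm_eq_abs, abs_of_nonneg (by positivity)]
      exact hC _
    have hindep : Pairwise (Function.onFun (IndepFun · · Pr) fun i ω => dist (X i ω) c ^ 2) :=
      fun i j hij => (hXindep.indepFun hij).comp hg hg
    have hident : ∀ i, IdentDistrib (fun ω => dist (X i ω) c ^ 2)
        (fun ω => dist (X 0 ω) c ^ 2) Pr Pr := fun i =>
      IdentDistrib.comp ⟨(hXmeas i).aemeasurable, (hXmeas 0).aemeasurable, by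
        rw [hXdist i, hXdist 0]⟩ hg
    have h := strong_law_ae_real _ hint hindep hident
    have hE : (∫ x, dist (X 0 x) c ^ 2 ∂Pr) = m c := by
      simp only [hm]
      rw [← hXdist 0]
      exact (integral_map (hXmeas 0).aemeasurable hg.aestronglyMeasurable).symm
    rwa [hE] at h
  have hae : ∀ᵐ ω ∂Pr, ∀ c : G,
      Tendsto (fun n : ℕ => (∑ i ∈ Finset.range n, dist (X i ω) c ^ 2) / n)
        atTop (𝓝 (m c)) := ae_all_iff.2 hSLLN
  filter_upwards [hae] with ω hω
  have hnt := splitPt_tendsto_atTop (t := t) ht0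
  -- Block (second half) averages converge to `m c` for each `c`.
  set B : G → ℕ → ℝ := fun c N => ((N - splitPt t N : ℕ) : ℝ)⁻¹ *
      ∑ i ∈ Finset.Ico (splitPt t N) N, dist (X i ω) c ^ 2 with hB
  have hblock : ∀ c : G, Tendsto (fun N => B c N) atTop (𝓝 (m c)) :=
    fun c => block_tendsto ht0 ht1 _ _ (hω c)
  -- `m c > m μ` for `c ≠ μ`.
  have hgt : ∀ c : G, c ≠ μ → m μ < m c := by
    intro c hc
    by_contra h
    push_neg at h
    exact hc (hμuniq c fun c' => h.trans (hμmin c'))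
  -- Eventually the empirical Fréchet mean of the second block is `μ`.
  have hμB : ∀ᶠ N in atTop, μB N ω = μ := by
    by_cases hall : ∀ c : G, c = μ
    · exact Eventually.of_forall fun N => hall _
    · push_neg at hall
      obtain ⟨c₀, hc₀⟩ := hall
      have hne : (Finset.univ.filter (· ≠ μ)).Nonempty :=
        ⟨c₀, by simp [hc₀]⟩
      set ε : ℝ := (Finset.univ.filter (· ≠ μ)).inf' hne (fun c => m c - m μ) with hε
      have hε0 : 0 < ε := by
        rw [hε, Finset.lt_inf'_iff]
        intro c hc
        simp only [Finset.mem_filter] at hc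
        linarith [hgt c hc.2]
      have hev : ∀ᶠ N in atTop, ∀ c : G, |B c N - m c| < ε / 2 := by
        rw [eventually_all]
        intro c
        obtain ⟨N₀, hN₀⟩ := Metric.tendsto_atTop.1 (hblock c) (ε / 2) (by linarith)
        refine eventually_atTop.2 ⟨N₀, fun N hN => ?_⟩
        have := hN₀ N hN
        rwa [Real.dist_eq] at this
      filter_upwards [hev] with N hN
      by_contra hne'
      have h1 : B (μB N ω) N ≤ B μ N := hμBmin N ω μ
      have h2 := hN (μB N ω)
      have h3 := hN μ
      have hmem : μB N ω ∈ Finset.univ.filter (· ≠ μ) :=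
        Finset.mem_filter.2 ⟨Finset.mem_univ _, hne'⟩
      have h5 : ε ≤ m (μB N ω) - m μ := Finset.inf'_le _ hmem
      rw [abs_sub_lt_iff] at h2 h3
      linarith [h2.1, h2.2, h3.1, h3.2]
  -- Conclude.
  have hfin : Tendsto (fun N : ℕ => ((splitPt t N : ℕ) : ℝ)⁻¹ *
      ∑ i ∈ Finset.range (splitPt t N), dist (X i ω) μ ^ 2) atTop (𝓝 (m μ)) := by
    have h := (hω μ).comp hnt
    refine h.congr fun N => ?_
    rw [Function.comp_apply, div_eq_inv_mul]
  refine Tendsto.congr' ?_ hfin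
  filter_upwards [hμB] with N hN
  rw [hN]
end

section
/- Strong consistency of the asymptotic variance estimator: Let (𝒢, d) be a finite metric space and let X₁, X₂, … be i.i.d. 𝒢-valued random variables with distribution P having unique Fréchet mean μ. For each N let μ̂ be a measurable choice of minimizer of ω ↦ (1/N)Σᵢ₌₁^N d²(Xᵢ,ω), and set V̂ = (1/N)Σᵢ₌₁^N d²(Xᵢ,μ̂) and σ̂² = (1/N)Σᵢ₌₁^N d⁴(Xᵢ,μ̂) − V̂². Then σ̂² → σ² := E[d⁴(X₁,μ)] − V² almost surely as N → ∞, where V = E[d²(X₁,μ)]. -/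
open MeasureTheory ProbabilityTheory Filter Topology

lemma slln_helper
    {G : Type*} [MetricSpace G] [Fintype G] [Nonempty G]
    [MeasurableSpace G] [BorelSpace G]
    {Ω : Type*} [MeasurableSpace Ω] (Pr : Measure Ω) [IsProbabilityMeasure Pr]
    (P : Measure G) [IsProbabilityMeasure P]
    (X : ℕ → Ω → G) (hXmeas : ∀ i, Measurable (X i))
    (hXindep : iIndepFun X Pr)
    (hXdist : ∀ i, Measure.map (X i) Pr = P)
    (c : G) (k : ℕ) :
    ∀ᵐ ω ∂Pr, Tendsto (fun N : ℕ => (N : ℝ)⁻¹ * ∑ i ∈ Finset.range N, dist (X i ω) c ^ k)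
      atTop (𝓝 (∫ x, dist x c ^ k ∂P)) := by
  set g : G → ℝ := fun x => dist x c ^ k with hg
  have hgc : Continuous g := (continuous_id.dist continuous_const).pow k
  have hgm : Measurable g := hgc.measurable
  set Y : ℕ → Ω → ℝ := fun i ω => g (X i ω) with hY
  obtain ⟨C, hC⟩ : ∃ C, ∀ x : G, g x ≤ C := Finite.exists_le g
  have hint : Integrable (Y 0) Pr := by
    refine (integrable_const C).mono' ((hgm.comp (hXmeas 0)).aestronglyMeasurable) ?_
    filter_upwards with ω
    rw [Real.norm_eq_abs, abs_of_nonneg (by positivity)]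
    exact hC _
  have hindep : Pairwise fun i j => IndepFun (Y i) (Y j) Pr := fun i j hij =>
    (hXindep.indepFun hij).comp hgm hgm
  have hident : ∀ i, IdentDistrib (Y i) (Y 0) Pr Pr := by
    intro i
    have hXid : IdentDistrib (X i) (X 0) Pr Pr :=
      ⟨(hXmeas i).aemeasurable, (hXmeas 0).aemeasurable, by rw [hXdist i, hXdist 0]⟩
    exact hXid.comp hgm
  have hs := strong_law_ae Y hint hindep hident
  have hEq : ∫ a, Y 0 a ∂Pr = ∫ x, dist x c ^ k ∂P := by
    rw [← hXdist 0, integral_map (hXmeas 0).aemeasurable hgm.aestronglyMeasurable]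
  filter_upwards [hs] with ω hω
  rw [← hEq]
  simpa [smul_eq_mul] using hω

/-- **Strong consistency of the asymptotic variance estimator.**
Let `(𝒢, d)` be a finite metric space and `X₁, X₂, …` i.i.d. with distribution
`P` having unique Fréchet mean `μ`.  For each `N` let `μ̂` be a measurable
choice of minimizer of `ω ↦ (1/N) Σ_{i=1}^N d²(Xᵢ,ω)`, and set
`V̂ = (1/N) Σ d²(Xᵢ,μ̂)` and `σ̂² = (1/N) Σ d⁴(Xᵢ,μ̂) − V̂²`.  Then
`σ̂² → σ² = E[d⁴(X₁,μ)] − V²` almost surely, where `V = E[d²(X₁,μ)]`. -/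
theorem asymptotic_variance_estimator_consistency
    {G : Type*} [MetricSpace G] [Fintype G] [Nonempty G]
    [MeasurableSpace G] [BorelSpace G]
    {Ω : Type*} [MeasurableSpace Ω] (Pr : Measure Ω) [IsProbabilityMeasure Pr]
    (P : Measure G) [IsProbabilityMeasure P]
    (X : ℕ → Ω → G) (hXmeas : ∀ i, Measurable (X i))
    (hXindep : iIndepFun X Pr)
    (hXdist : ∀ i, Measure.map (X i) Pr = P)
    (μ : G) (hμmin : ∀ c : G, ∫ x, dist x μ ^ 2 ∂P ≤ ∫ x, dist x c ^ 2 ∂P)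
    (hμuniq : ∀ c : G, (∀ c' : G, ∫ x, dist x c ^ 2 ∂P ≤ ∫ x, dist x c' ^ 2 ∂P) → c = μ)
    (μhat : ℕ → Ω → G) (hμhatmeas : ∀ N, Measurable (μhat N))
    (hμhatmin : ∀ (N : ℕ) (ω : Ω) (c : G),
      (N : ℝ)⁻¹ * ∑ i ∈ Finset.range N, dist (X i ω) (μhat N ω) ^ 2 ≤
        (N : ℝ)⁻¹ * ∑ i ∈ Finset.range N, dist (X i ω) c ^ 2)
    (V : ℝ) (hV : V = ∫ x, dist x μ ^ 2 ∂P) :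
    ∀ᵐ ω ∂Pr, Tendsto
      (fun N : ℕ =>
        (N : ℝ)⁻¹ * ∑ i ∈ Finset.range N, dist (X i ω) (μhat N ω) ^ 4 -
          ((N : ℝ)⁻¹ * ∑ i ∈ Finset.range N, dist (X i ω) (μhat N ω) ^ 2) ^ 2)
      atTop (𝓝 ((∫ x, dist x μ ^ 4 ∂P) - V ^ 2)) := by
  have hall : ∀ᵐ ω ∂Pr, ∀ c : G,
      Tendsto (fun N : ℕ => (N : ℝ)⁻¹ * ∑ i ∈ Finset.range N, dist (X i ω) c ^ 2)
        atTop (𝓝 (∫ x, dist x c ^ 2 ∂P)) ∧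
      Tendsto (fun N : ℕ => (N : ℝ)⁻¹ * ∑ i ∈ Finset.range N, dist (X i ω) c ^ 4)
        atTop (𝓝 (∫ x, dist x c ^ 4 ∂P)) :=
    ae_all_iff.2 fun c =>
      (slln_helper Pr P X hXmeas hXindep hXdist c 2).and
        (slln_helper Pr P X hXmeas hXindep hXdist c 4)
  have hgap : ∀ c : G, c ≠ μ → ∫ x, dist x μ ^ 2 ∂P < ∫ x, dist x c ^ 2 ∂P := by
    intro c hc
    rcases lt_or_eq_of_le (hμmin c) with h | h
    · exact h
    · exact absurd (hμuniq c fun c' => h ▸ hμmin c') hc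
  filter_upwards [hall] with ω hω
  have hev : ∀ᶠ N : ℕ in atTop, ∀ c : G, c ≠ μ →
      (N : ℝ)⁻¹ * ∑ i ∈ Finset.range N, dist (X i ω) μ ^ 2 <
        (N : ℝ)⁻¹ * ∑ i ∈ Finset.range N, dist (X i ω) c ^ 2 := by
    rw [eventually_all]
    intro c
    rcases eq_or_ne c μ with rfl | hc
    · filter_upwards with N h; exact absurd rfl h
    · filter_upwards [(hω μ).1.eventually_lt (hω c).1 (hgap c hc)] with N hN _
      exact hN
  have hμeq : ∀ᶠ N in atTop, μhat N ω = μ := by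
    filter_upwards [hev] with N hN
    by_contra h
    exact absurd (hμhatmin N ω μ) (not_le.2 (hN _ h))
  have hlim : Tendsto
      (fun N : ℕ =>
        (N : ℝ)⁻¹ * ∑ i ∈ Finset.range N, dist (X i ω) μ ^ 4 -
          ((N : ℝ)⁻¹ * ∑ i ∈ Finset.range N, dist (X i ω) μ ^ 2) ^ 2)
      atTop (𝓝 ((∫ x, dist x μ ^ 4 ∂P) - V ^ 2)) := by
    rw [hV]
    exact (hω μ).2.sub ((hω μ).1.pow 2)
  refine Tendsto.congr' ?_ hlim
  filter_upwards [hμeq] with N hN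
  rw [hN]
end

section
/- Negligibility of the mean-difference component of the test statistic under the null hypothesis: Let (𝒢, d) be a finite metric space, let X₁, X₂, … be i.i.d. 𝒢-valued random variables with distribution P having unique Fréchet mean μ and σ² = E[d⁴(X₁,μ)] − V² > 0. Fix t ∈ (0,1) and for each N set n = ⌊Nt⌋; let μ̂ₙ and μ̂_{N−n} be measurable choices of empirical Fréchet means of X₁,…,Xₙ and of Xₙ₊₁,…,X_N respectively, and define V̂ₙ, V̂_{N−n}, V̂ₙᶜ = (1/n)Σᵢ₌₁ⁿ d²(Xᵢ, μ̂_{N−n}), and V̂_{N−n}ᶜ = (1/(N−n))Σᵢ₌ₙ₊₁^N d²(Xᵢ, μ̂ₙ). Then N · (t(1−t)/σ²) · (V̂ₙᶜ − V̂ₙ + V̂_{N−n}ᶜ − V̂_{N−n})² converges to 0 in probability as N → ∞. -/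
open MeasureTheory ProbabilityTheory Filter Topology

/-- The empirical Fréchet functional of the observations `X_a, …, X_{b-1}`
evaluated at the candidate point `c`:  `(1/(b-a)) Σ_{a ≤ i < b} d²(Xᵢ, c)`. -/
noncomputable def empF {G Ω : Type*} [MetricSpace G]
    (X : ℕ → Ω → G) (a b : ℕ) (ω : Ω) (c : G) : ℝ :=
  ((b - a : ℕ) : ℝ)⁻¹ * ∑ i ∈ Finset.Ico a b, dist (X i ω) c ^ 2

private lemma splitPt_tendsto_atTop_s10 {t : ℝ} (ht : 0 < t) :
    Tendsto (splitPt t) atTop atTop := by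
  have h1 : Tendsto (fun N : ℕ => (N : ℝ) * t) atTop atTop :=
    tendsto_natCast_atTop_atTop.atTop_mul_const ht
  exact tendsto_nat_floor_atTop.comp h1

/-- If a finite family of real sequences converges pointwise to `F` having unique
minimizer `μ`, then any sequence of minimizers of the approximations is eventually `μ`. -/
private lemma minimizer_eventually_eq {G : Type*} [Fintype G] (F : G → ℝ) (μ : G)
    (hmin : ∀ c, F μ ≤ F c) (huniq : ∀ c, (∀ c', F c ≤ F c') → c = μ)
    (S : ℕ → G → ℝ) (hS : ∀ c, Tendsto (fun N => S N c) atTop (𝓝 (F c)))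
    (m : ℕ → G) (hm : ∀ N c, S N (m N) ≤ S N c) :
    ∀ᶠ N in atTop, m N = μ := by
  classical
  by_cases hG : ∀ c : G, c = μ
  · exact Eventually.of_forall fun N => hG (m N)
  push_neg at hG
  obtain ⟨c₀, hc₀⟩ := hG
  set s : Finset G := Finset.univ.filter (fun c => c ≠ μ) with hs
  have hsne : s.Nonempty := ⟨c₀, by simp [hs, hc₀]⟩
  set δ : ℝ := s.inf' hsne (fun c => F c - F μ) with hδ
  have hδpos : 0 < δ := by
    rw [hδ, Finset.lt_inf'_iff]
    intro c hc
    have hcne : c ≠ μ := by simpa [hs] using hc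
    have hlt : F μ < F c := by
      rcases lt_or_eq_of_le (hmin c) with h | h
      · exact h
      · exact absurd (huniq c fun c' => h ▸ hmin c') hcne
    linarith
  have hev : ∀ᶠ N in atTop, ∀ c : G, |S N c - F c| < δ / 3 := by
    rw [eventually_all]
    intro c
    have := Metric.tendsto_atTop.1 (hS c) (δ / 3) (by linarith)
    obtain ⟨N₀, hN₀⟩ := this
    refine eventually_atTop.2 ⟨N₀, fun N hN => ?_⟩
    have := hN₀ N hN
    rwa [Real.dist_eq] at this
  filter_upwards [hev] with N hN
  by_contra hne
  have hmem : m N ∈ s := by simp [hs, hne]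
  have h1 : δ ≤ F (m N) - F μ := Finset.inf'_le _ hmem
  have h2 := hN (m N)
  have h3 := hN μ
  have h4 := hm N μ
  rw [abs_sub_lt_iff] at h2 h3
  linarith [h2.2, h3.1]

/-- The head–block empirical average converges (along the split point). -/
private lemma head_avg_tendsto {t : ℝ} (ht0 : 0 < t) (Y : ℕ → ℝ) (L : ℝ)
    (h : Tendsto (fun k : ℕ => (∑ i ∈ Finset.range k, Y i) / k) atTop (𝓝 L)) :
    Tendsto (fun N => ((splitPt t N - 0 : ℕ) : ℝ)⁻¹ *
      ∑ i ∈ Finset.Ico 0 (splitPt t N), Y i) atTop (𝓝 L) := by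
  have h2 := h.comp (splitPt_tendsto_atTop_s10 ht0)
  refine h2.congr fun N => ?_
  show (∑ i ∈ Finset.range (splitPt t N), Y i) / (splitPt t N : ℝ) = _
  rw [Finset.range_eq_Ico, Nat.sub_zero, div_eq_inv_mul]

/-- The tail–block empirical average converges. -/
private lemma block_avg_tendsto {t : ℝ} (ht0 : 0 < t) (ht1 : t < 1) (Y : ℕ → ℝ) (L : ℝ)
    (h : Tendsto (fun k : ℕ => (∑ i ∈ Finset.range k, Y i) / k) atTop (𝓝 L)) :
    Tendsto (fun N => ((N - splitPt t N : ℕ) : ℝ)⁻¹ *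
      ∑ i ∈ Finset.Ico (splitPt t N) N, Y i) atTop (𝓝 L) := by
  have h1t : (0 : ℝ) < 1 - t := by linarith
  set e : ℕ → ℝ := fun k => (∑ i ∈ Finset.range k, Y i) / k - L with he_def
  have he : Tendsto e atTop (𝓝 0) := by
    simpa using h.sub_const L
  rw [tendsto_iff_dist_tendsto_zero]
  refine squeeze_zero' (Eventually.of_forall fun N => dist_nonneg)
    (f := fun N => dist (((N - splitPt t N : ℕ) : ℝ)⁻¹ *
      ∑ i ∈ Finset.Ico (splitPt t N) N, Y i) L)
    (g := fun N => (1 - t)⁻¹ * |e N| + (t * (1 - t)⁻¹) * |e (splitPt t N)|) ?_ ?_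
  · filter_upwards [eventually_ge_atTop 1, (splitPt_tendsto_atTop_s10 ht0).eventually_ge_atTop 1]
      with N hN1 hn1
    set n := splitPt t N with hn_def
    have hNpos : (0 : ℝ) < N := by exact_mod_cast hN1
    have hnpos : (0 : ℝ) < n := by exact_mod_cast hn1
    have hnN : (n : ℝ) ≤ (N : ℝ) * t := Nat.floor_le (by positivity)
    have hlt : (n : ℝ) < N := lt_of_le_of_lt hnN (by nlinarith)
    have hnN' : n ≤ N := by exact_mod_cast hlt.le
    have hden : (0 : ℝ) < (N : ℝ) - n := by linarith
    have hcast : ((N - n : ℕ) : ℝ) = (N : ℝ) - n := by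
      rw [Nat.cast_sub hnN']
    have hNne : (N : ℝ) ≠ 0 := ne_of_gt hNpos
    have hnne : (n : ℝ) ≠ 0 := ne_of_gt hnpos
    have hdenne : (N : ℝ) - n ≠ 0 := ne_of_gt hden
    have hsum : ∑ i ∈ Finset.Ico n N, Y i =
        (∑ i ∈ Finset.range N, Y i) - ∑ i ∈ Finset.range n, Y i :=
      Finset.sum_Ico_eq_sub _ hnN'
    have hTL : (((N - n : ℕ) : ℝ)⁻¹ * ∑ i ∈ Finset.Ico n N, Y i) - L
        = ((N : ℝ) / ((N : ℝ) - n)) * e N - ((n : ℝ) / ((N : ℝ) - n)) * e n := by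
      rw [hsum, hcast, he_def]
      field_simp
      ring
    rw [Real.dist_eq, hTL]
    have hc1 : |(N : ℝ) / ((N : ℝ) - n)| ≤ (1 - t)⁻¹ := by
      rw [abs_of_nonneg (div_nonneg hNpos.le hden.le), inv_eq_one_div,
        div_le_div_iff₀ hden h1t]
      nlinarith
    have hc2 : |(n : ℝ) / ((N : ℝ) - n)| ≤ t * (1 - t)⁻¹ := by
      rw [abs_of_nonneg (div_nonneg hnpos.le hden.le), inv_eq_one_div, mul_one_div,
        div_le_div_iff₀ hden h1t]
      nlinarith
    calc |((N : ℝ) / ((N : ℝ) - n)) * e N - ((n : ℝ) / ((N : ℝ) - n)) * e n|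
        ≤ |((N : ℝ) / ((N : ℝ) - n)) * e N| + |((n : ℝ) / ((N : ℝ) - n)) * e n| :=
          abs_sub _ _
      _ = |(N : ℝ) / ((N : ℝ) - n)| * |e N| + |(n : ℝ) / ((N : ℝ) - n)| * |e n| := by
          rw [abs_mul, abs_mul]
      _ ≤ (1 - t)⁻¹ * |e N| + (t * (1 - t)⁻¹) * |e n| :=
          add_le_add (mul_le_mul_of_nonneg_right hc1 (abs_nonneg _))
            (mul_le_mul_of_nonneg_right hc2 (abs_nonneg _))
  · have h1 : Tendsto (fun k => |e k|) atTop (𝓝 0) := by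
      simpa using he.abs
    have h2 : Tendsto (fun N => |e (splitPt t N)|) atTop (𝓝 0) :=
      h1.comp (splitPt_tendsto_atTop_s10 ht0)
    have := (h1.const_mul ((1 - t)⁻¹)).add (h2.const_mul (t * (1 - t)⁻¹))
    simpa using this

/-- **Negligibility of the mean-difference component of the test statistic
under the null hypothesis.**  For i.i.d. observations on a finite metric space
with unique Fréchet mean `μ` and `σ² = E[d⁴(X₁,μ)] − V² > 0`, fix `t ∈ (0,1)`
and set `n = ⌊Nt⌋`.  With `μ̂ₙ`, `μ̂_{N−n}` measurable empirical Fréchet means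
of the two blocks, `V̂ₙ = (1/n)Σ_{i≤n} d²(Xᵢ,μ̂ₙ)`,
`V̂_{N−n} = (1/(N−n))Σ_{i>n} d²(Xᵢ,μ̂_{N−n})`, and the contaminated versions
`V̂ₙᶜ`, `V̂_{N−n}ᶜ` obtained by swapping the means, the quantity
`N (t(1−t)/σ²) (V̂ₙᶜ − V̂ₙ + V̂_{N−n}ᶜ − V̂_{N−n})²` converges to `0` in
probability as `N → ∞`. -/
theorem mean_difference_component_negligible
    {G : Type*} [MetricSpace G] [Fintype G] [Nonempty G]
    [MeasurableSpace G] [BorelSpace G]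
    {Ω : Type*} [MeasurableSpace Ω] (Pr : Measure Ω) [IsProbabilityMeasure Pr]
    (P : Measure G) [IsProbabilityMeasure P]
    (X : ℕ → Ω → G) (hXmeas : ∀ i, Measurable (X i))
    (hXindep : iIndepFun X Pr)
    (hXdist : ∀ i, Measure.map (X i) Pr = P)
    (μ : G) (hμmin : ∀ c : G, ∫ x, dist x μ ^ 2 ∂P ≤ ∫ x, dist x c ^ 2 ∂P)
    (hμuniq : ∀ c : G, (∀ c' : G, ∫ x, dist x c ^ 2 ∂P ≤ ∫ x, dist x c' ^ 2 ∂P) → c = μ)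
    (V σ2 : ℝ) (hV : V = ∫ x, dist x μ ^ 2 ∂P)
    (hσ2 : σ2 = (∫ x, dist x μ ^ 4 ∂P) - V ^ 2) (hσ2pos : 0 < σ2)
    (t : ℝ) (ht : t ∈ Set.Ioo (0 : ℝ) 1)
    (μA : ℕ → Ω → G) (hμAmeas : ∀ N, Measurable (μA N))
    (hμAmin : ∀ (N : ℕ) (ω : Ω) (c : G),
      empF X 0 (splitPt t N) ω (μA N ω) ≤ empF X 0 (splitPt t N) ω c)
    (μB : ℕ → Ω → G) (hμBmeas : ∀ N, Measurable (μB N))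
    (hμBmin : ∀ (N : ℕ) (ω : Ω) (c : G),
      empF X (splitPt t N) N ω (μB N ω) ≤ empF X (splitPt t N) N ω c) :
    TendstoInMeasure Pr
      (fun (N : ℕ) (ω : Ω) =>
        (N : ℝ) * (t * (1 - t) / σ2) *
          (empF X 0 (splitPt t N) ω (μB N ω) - empF X 0 (splitPt t N) ω (μA N ω) +
            empF X (splitPt t N) N ω (μA N ω) - empF X (splitPt t N) N ω (μB N ω)) ^ 2)
      atTop (fun _ => (0 : ℝ)) := by
  classical
  obtain ⟨ht0, ht1⟩ := ht
  set F : G → ℝ := fun c => ∫ x, dist x c ^ 2 ∂P with hF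
  have hg : ∀ c : G, Measurable fun x : G => dist x c ^ 2 := fun c =>
    ((continuous_id.dist continuous_const).pow 2).measurable
  -- Strong law of large numbers for each candidate point.
  have hSLLN : ∀ c : G, ∀ᵐ ω ∂Pr,
      Tendsto (fun k : ℕ => (∑ i ∈ Finset.range k, dist (X i ω) c ^ 2) / k)
        atTop (𝓝 (F c)) := by
    intro c
    have hint : Integrable (fun ω => dist (X 0 ω) c ^ 2) Pr := by
      obtain ⟨C, hC⟩ : ∃ C, ∀ x : G, dist x c ^ 2 ≤ C :=
        ⟨Finset.univ.sup' Finset.univ_nonempty (fun x => dist x c ^ 2),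
          fun x => Finset.le_sup' (fun x => dist x c ^ 2) (Finset.mem_univ x)⟩
      refine (integrable_const C).mono'
        (((hg c).comp (hXmeas 0)).aestronglyMeasurable) ?_
      refine Eventually.of_forall fun ω => ?_
      rw [Real.norm_eq_abs, abs_of_nonneg (by positivity)]
      exact hC _
    have hindep : Pairwise (Function.onFun (IndepFun · · Pr) fun i ω => dist (X i ω) c ^ 2) :=
      fun i j hij => (hXindep.indepFun hij).comp (hg c) (hg c)
    have hident : ∀ i, IdentDistrib (fun ω => dist (X i ω) c ^ 2)
        (fun ω => dist (X 0 ω) c ^ 2) Pr Pr := fun i =>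
      IdentDistrib.comp
        ⟨(hXmeas i).aemeasurable, (hXmeas 0).aemeasurable, by rw [hXdist i, hXdist 0]⟩
        (hg c)
    have hkey := strong_law_ae_real _ hint hindep hident
    have hEq : ∫ x, dist (X 0 x) c ^ 2 ∂Pr = F c := by
      have h5 : F c = ∫ x, dist x c ^ 2 ∂P := rfl
      rw [h5, ← hXdist 0,
        integral_map (hXmeas 0).aemeasurable (hg c).aestronglyMeasurable]
    rwa [hEq] at hkey
  have hae : ∀ᵐ ω ∂Pr, ∀ c : G,
      Tendsto (fun k : ℕ => (∑ i ∈ Finset.range k, dist (X i ω) c ^ 2) / k)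
        atTop (𝓝 (F c)) := ae_all_iff.2 hSLLN
  -- Almost surely, the statistic tends to zero (it is eventually exactly zero).
  have hmainae : ∀ᵐ ω ∂Pr, Tendsto (fun N : ℕ =>
      (N : ℝ) * (t * (1 - t) / σ2) *
        (empF X 0 (splitPt t N) ω (μB N ω) - empF X 0 (splitPt t N) ω (μA N ω) +
          empF X (splitPt t N) N ω (μA N ω) - empF X (splitPt t N) N ω (μB N ω)) ^ 2)
      atTop (𝓝 0) := by
    filter_upwards [hae] with ω hω
    have hSA : ∀ c, Tendsto (fun N => empF X 0 (splitPt t N) ω c) atTop (𝓝 (F c)) :=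
      fun c => by
        simpa only [empF] using head_avg_tendsto ht0 (fun i => dist (X i ω) c ^ 2) (F c) (hω c)
    have hSB : ∀ c, Tendsto (fun N => empF X (splitPt t N) N ω c) atTop (𝓝 (F c)) :=
      fun c => by
        simpa only [empF] using
          block_avg_tendsto ht0 ht1 (fun i => dist (X i ω) c ^ 2) (F c) (hω c)
    have hA : ∀ᶠ N in atTop, μA N ω = μ :=
      minimizer_eventually_eq F μ hμmin hμuniq
        (fun N c => empF X 0 (splitPt t N) ω c) hSA
        (fun N => μA N ω) (fun N c => hμAmin N ω c)
    have hB : ∀ᶠ N in atTop, μB N ω = μ :=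
      minimizer_eventually_eq F μ hμmin hμuniq
        (fun N c => empF X (splitPt t N) N ω c) hSB
        (fun N => μB N ω) (fun N c => hμBmin N ω c)
    refine tendsto_const_nhds.congr' ?_
    filter_upwards [hA, hB] with N h1 h2
    rw [h1, h2]
    ring
  -- Measurability of the statistic.
  have hme : ∀ (a b : ℕ) (m : Ω → G), Measurable m →
      Measurable (fun ω => empF X a b ω (m ω)) := by
    intro a b m hm
    simp only [empF]
    apply Measurable.const_mul
    apply Finset.measurable_sum
    intro i _
    exact (measurable_of_countable (fun p : G × G => dist p.1 p.2)).comp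
      ((hXmeas i).prodMk hm) |>.pow_const 2
  have hmeasf : ∀ N : ℕ, AEStronglyMeasurable (fun ω : Ω =>
      (N : ℝ) * (t * (1 - t) / σ2) *
        (empF X 0 (splitPt t N) ω (μB N ω) - empF X 0 (splitPt t N) ω (μA N ω) +
          empF X (splitPt t N) N ω (μA N ω) - empF X (splitPt t N) N ω (μB N ω)) ^ 2) Pr := by
    intro N
    have h1 := hme 0 (splitPt t N) (μB N) (hμBmeas N)
    have h2 := hme 0 (splitPt t N) (μA N) (hμAmeas N)
    have h3 := hme (splitPt t N) N (μA N) (hμAmeas N)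
    have h4 := hme (splitPt t N) N (μB N) (hμBmeas N)
    exact ((((((h1.sub h2).add h3).sub h4).pow_const 2).const_mul
      ((N : ℝ) * (t * (1 - t) / σ2)))).aestronglyMeasurable
  exact tendstoInMeasure_of_tendsto_ae hmeasf hmainae
end
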